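/- If a 3×2 matrix f with entries in R₁ is stable, then all three of its 2×2 minors are nonzero polynomials. -/

import Mathlib

open MvPolynomial Matrix

noncomputable section

/-- The polynomial ring `R = ℂ[x₀,x₁,x₂]`. -/
abbrev Rp : Type := MvPolynomial (Fin 3) ℂ

/-- `p` is a linear form. -/
def IsLin (p : Rp) : Prop := p.IsHomogeneous 1

/-- The `R`-submodule `K ⊗ R` of `ℂ³ ⊗ R ≅ (Fin 3 → R)` attached to a subspace
`K ⊆ ℂ³`; a vector of linear forms lies in it iff it lies in `K ⊗ R₁`. -/
def KtensorR (K : Submodule ℂ (Fin 3 → ℂ)) : Submodule Rp (Fin 3 → Rp) :=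
  Submodule.span Rp ((fun k : Fin 3 → ℂ => fun i => (C (k i) : Rp)) '' (K : Set (Fin 3 → ℂ)))

/-- `f` maps `H ⊆ ℂ²` into `K ⊆ ℂ³`: for every `h ∈ H` the triple of linear forms `f·h`
lies in `K ⊗ R₁`. -/
def MapsInto (f : Matrix (Fin 3) (Fin 2) Rp) (H : Submodule ℂ (Fin 2 → ℂ))
    (K : Submodule ℂ (Fin 3 → ℂ)) : Prop :=
  ∀ h ∈ H, f.mulVec (fun j => (C (h j) : Rp)) ∈ KtensorR K

/-- `f` is stable : `2·dim K > 3·dim H` whenever `f` maps a nonzero `H` into `K` and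
`(H, K) ≠ (ℂ², ℂ³)`. -/
def Stable32 (f : Matrix (Fin 3) (Fin 2) Rp) : Prop :=
  ∀ (H : Submodule ℂ (Fin 2 → ℂ)) (K : Submodule ℂ (Fin 3 → ℂ)), H ≠ ⊥ →
    MapsInto f H K → ¬(H = ⊤ ∧ K = ⊤) →
    3 * Module.finrank ℂ H < 2 * Module.finrank ℂ K

namespace Stmt5Aux

/-! ### Elementary linear algebra on `ℂ³` via dot products -/

/-- Dot product of a coefficient vector with a point. -/
def dot (v x : Fin 3 → ℂ) : ℂ := ∑ i, v i * x i

lemma dot_add (v x y : Fin 3 → ℂ) : dot v (x + y) = dot v x + dot v y := by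
  simp [dot, mul_add, Finset.sum_add_distrib]

lemma dot_sub (v x y : Fin 3 → ℂ) : dot v (x - y) = dot v x - dot v y := by
  simp [dot, mul_sub, Finset.sum_sub_distrib]

lemma dot_smul (v x : Fin 3 → ℂ) (c : ℂ) : dot v (c • x) = c * dot v x := by
  simp [dot, Finset.mul_sum, mul_left_comm]

lemma dot_single (v : Fin 3 → ℂ) (i : Fin 3) : dot v (Pi.single i 1) = v i := by
  simp [dot, Pi.single_apply]

lemma dot_zero_left (x : Fin 3 → ℂ) : dot 0 x = 0 := by simp [dot]

lemma dot_sub_left (v w x : Fin 3 → ℂ) : dot (v - w) x = dot v x - dot w x := by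
  simp [dot, sub_mul, Finset.sum_sub_distrib]

lemma dot_smul_left (v x : Fin 3 → ℂ) (c : ℂ) : dot (c • v) x = c * dot v x := by
  simp [dot, Finset.mul_sum, mul_assoc]

lemma eq_zero_of_dot (v : Fin 3 → ℂ) (h : ∀ x, dot v x = 0) : v = 0 :=
  funext fun i => by simpa [dot_single] using h (Pi.single i 1)

lemma exists_dot_ne (v : Fin 3 → ℂ) (hv : v ≠ 0) : ∃ y, dot v y ≠ 0 := by
  obtain ⟨i, hi⟩ := Function.ne_iff.mp hv
  exact ⟨Pi.single i 1, by simpa [dot_single] using hi⟩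

/-- A vector whose dot product vanishes wherever `dot v` is nonzero is zero. -/
lemma L1 (v w : Fin 3 → ℂ) (hv : v ≠ 0) (h : ∀ x, dot v x ≠ 0 → dot w x = 0) : w = 0 := by
  obtain ⟨y, hy⟩ := exists_dot_ne v hv
  apply eq_zero_of_dot
  intro x
  by_cases hx : dot v x = 0
  · have h1 := h (x + y) (by rw [dot_add, hx, zero_add]; exact hy)
    have h2 := h (x - y) (by rw [dot_sub, hx, zero_sub]; exact neg_ne_zero.mpr hy)
    rw [dot_add] at h1
    rw [dot_sub] at h2
    linear_combination (h1 + h2) / 2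
  · exact h x hx

/-- A vector vanishing on the kernel of `dot v` is a multiple of `v`. -/
lemma L2 (v w : Fin 3 → ℂ) (hv : v ≠ 0) (h : ∀ x, dot v x = 0 → dot w x = 0) :
    ∃ lam : ℂ, w = lam • v := by
  obtain ⟨y, hy⟩ := exists_dot_ne v hv
  refine ⟨dot w y / dot v y, ?_⟩
  have key : ∀ x, dot w x = (dot w y / dot v y) * dot v x := by
    intro x
    have hz : dot v ((dot v y) • x - (dot v x) • y) = 0 := by
      rw [dot_sub, dot_smul, dot_smul]; ring
    have hw := h _ hz
    rw [dot_sub, dot_smul, dot_smul] at hw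
    field_simp
    linear_combination hw
  funext i
  have := key (Pi.single i 1)
  simpa [dot_single] using this

/-- Core dichotomy: a vanishing `2×2` determinant of linear functionals yields a
column relation or a row relation. -/
lemma core (P Q P' Q' : Fin 3 → ℂ)
    (hrel : ∀ x, dot P x * dot Q' x = dot Q x * dot P' x) :
    (∃ lam mu : ℂ, ¬(lam = 0 ∧ mu = 0) ∧ lam • P + mu • Q = 0 ∧ lam • P' + mu • Q' = 0) ∨
    (∃ lam mu : ℂ, ¬(lam = 0 ∧ mu = 0) ∧ lam • P + mu • P' = 0 ∧ lam • Q + mu • Q' = 0) := by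
  by_cases hP : P = 0
  · by_cases hQ : Q = 0
    · exact Or.inr ⟨1, 0, by simp, by simp [hP], by simp [hQ]⟩
    · have hP' : P' = 0 := by
        apply L1 Q P' hQ
        intro x hx
        have := hrel x
        rw [hP, dot_zero_left, zero_mul] at this
        exact (mul_eq_zero.mp this.symm).resolve_left hx
      exact Or.inl ⟨1, 0, by simp, by simp [hP], by simp [hP']⟩
  · by_cases hker : ∀ x, dot P x = 0 → dot P' x = 0
    · obtain ⟨lam, hP'⟩ := L2 P P' hP hker
      have hQ' : Q' - lam • Q = 0 := by
        apply L1 P _ hP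
        intro x hx
        have := hrel x
        rw [hP', dot_smul_left] at this
        rw [dot_sub_left, dot_smul_left]
        have : dot Q' x = lam * dot Q x := by
          apply mul_left_cancel₀ hx
          linear_combination this
        rw [this]; ring
      refine Or.inr ⟨lam, -1, by simp, ?_, ?_⟩
      · rw [hP']; funext i; simp
      · have : Q' = lam • Q := by rwa [sub_eq_zero] at hQ'
        rw [this]; funext i; simp
    · push_neg at hker
      obtain ⟨x₀, hx₀P, hx₀P'⟩ := hker
      have hQker : ∀ x, dot P x = 0 → dot Q x = 0 := by
        intro x hx
        by_cases hx' : dot P' x = 0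
        · have e1 := hrel (x + x₀)
          have e2 := hrel (x - x₀)
          rw [dot_add, dot_add, dot_add, dot_add, hx, hx₀P, zero_add, zero_mul] at e1
          rw [dot_sub, dot_sub, dot_sub, dot_sub, hx, hx₀P, sub_zero, zero_mul] at e2
          rw [hx'] at e1 e2
          have h2 : dot Q x * dot P' x₀ = 0 := by linear_combination (e1.symm - e2.symm) / 2
          exact (mul_eq_zero.mp h2).resolve_right hx₀P'
        · have := hrel x
          rw [hx, zero_mul] at this
          exact (mul_eq_zero.mp this.symm).resolve_right hx'
      obtain ⟨mu, hQ⟩ := L2 P Q hP hQker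
      have hQ' : Q' - mu • P' = 0 := by
        apply L1 P _ hP
        intro x hx
        have := hrel x
        rw [hQ, dot_smul_left] at this
        rw [dot_sub_left, dot_smul_left]
        have : dot Q' x = mu * dot P' x := by
          apply mul_left_cancel₀ hx
          linear_combination this
        rw [this]; ring
      refine Or.inl ⟨mu, -1, by simp, ?_, ?_⟩
      · rw [hQ]; funext i; simp
      · have : Q' = mu • P' := by rwa [sub_eq_zero] at hQ'
        rw [this]; funext i; simp

/-! ### Linear forms and their coefficient vectors -/

lemma degree_one_classify (d : Fin 3 →₀ ℕ) (hd : d.degree = 1) :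
    ∃ k : Fin 3, d = Finsupp.single k 1 := by
  have h3 : d 0 + d 1 + d 2 = 1 := by
    rw [← hd, Finsupp.degree_apply, Finset.sum_subset (Finset.subset_univ d.support)
      (fun i _ hi => Finsupp.notMem_support_iff.mp hi), Fin.sum_univ_three]
  have : (d 0 = 1 ∧ d 1 = 0 ∧ d 2 = 0) ∨ (d 0 = 0 ∧ d 1 = 1 ∧ d 2 = 0) ∨
      (d 0 = 0 ∧ d 1 = 0 ∧ d 2 = 1) := by omega
  rcases this with ⟨h0,h1,h2⟩|⟨h0,h1,h2⟩|⟨h0,h1,h2⟩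
  · exact ⟨0, by ext j; fin_cases j <;> simp [Finsupp.single_apply, h0, h1, h2]⟩
  · exact ⟨1, by ext j; fin_cases j <;> simp [Finsupp.single_apply, h0, h1, h2]⟩
  · exact ⟨2, by ext j; fin_cases j <;> simp [Finsupp.single_apply, h0, h1, h2]⟩

lemma degree_single (k : Fin 3) : (Finsupp.single k 1 : Fin 3 →₀ ℕ).degree = 1 := by
  simp [Finsupp.degree_apply, Finsupp.support_single_ne_zero _ one_ne_zero]

/-- The coefficient vector of a linear form. -/
def cv (p : Rp) : Fin 3 → ℂ := fun i => coeff (Finsupp.single i 1) p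

lemma lin_repr (p : Rp) (hp : IsLin p) :
    p = ∑ i : Fin 3, C (cv p i) * X i := by
  apply MvPolynomial.ext
  intro d
  rw [coeff_sum]
  simp only [coeff_C_mul, coeff_X']
  by_cases hd : d.degree = 1
  · obtain ⟨k, rfl⟩ := degree_one_classify d hd
    have hiff : ∀ i : Fin 3, (Finsupp.single i 1 = Finsupp.single k (1:ℕ)) ↔ i = k :=
      fun i => Finsupp.single_left_inj one_ne_zero
    rw [Finset.sum_eq_single k (fun i _ hik => by
      rw [if_neg (fun h => hik ((hiff i).mp h)), mul_zero])
      (fun h => absurd (Finset.mem_univ k) h)]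
    simp [cv]
  · rw [hp.coeff_eq_zero hd]
    symm
    apply Finset.sum_eq_zero
    intro i _
    rw [if_neg, mul_zero]
    intro h
    exact hd (h ▸ degree_single i)

lemma eval_lin (p : Rp) (hp : IsLin p) (x : Fin 3 → ℂ) :
    eval x p = dot (cv p) x := by
  conv_lhs => rw [lin_repr p hp]
  simp [dot, eval_sum]

lemma lin_eq_zero (p : Rp) (hp : IsLin p) (h : ∀ i, cv p i = 0) : p = 0 := by
  rw [lin_repr p hp]
  simp [h]

lemma isLin_comb (p q : Rp) (hp : IsLin p) (hq : IsLin q) (lam mu : ℂ) :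
    IsLin (C lam * p + C mu * q) := by
  have h1 : IsLin (C lam * p) := by
    rw [← smul_eq_C_mul]; exact (homogeneousSubmodule (Fin 3) ℂ 1).smul_mem lam hp
  have h2 : IsLin (C mu * q) := by
    rw [← smul_eq_C_mul]; exact (homogeneousSubmodule (Fin 3) ℂ 1).smul_mem mu hq
  exact h1.add h2

lemma comb_eq_zero (p q : Rp) (hp : IsLin p) (hq : IsLin q) (lam mu : ℂ)
    (h : lam • cv p + mu • cv q = 0) : C lam * p + C mu * q = 0 := by
  apply lin_eq_zero _ (isLin_comb p q hp hq lam mu)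
  intro i
  have := congrFun h i
  simp only [Pi.add_apply, Pi.smul_apply, smul_eq_mul, Pi.zero_apply] at this
  simp [cv, coeff_add, coeff_C_mul]
  simpa [cv] using this

/-! ### Stability contradictions -/

lemma third_index : ∀ a b : Fin 3, a ≠ b →
    ∃ c : Fin 3, c ≠ a ∧ c ≠ b ∧ ∀ i : Fin 3, i = a ∨ i = b ∨ i = c := by decide

lemma mem_KtensorR (K : Submodule ℂ (Fin 3 → ℂ)) (k : Fin 3 → ℂ) (hk : k ∈ K) :
    (fun i => (C (k i) : Rp)) ∈ KtensorR K :=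
  Submodule.subset_span ⟨k, hk, rfl⟩

/-- A column relation contradicts stability. -/
lemma colRel_contra (f : Matrix (Fin 3) (Fin 2) Rp) (hstable : Stable32 f)
    (a b : Fin 3) (hab : a ≠ b) (lam mu : ℂ) (hlm : ¬(lam = 0 ∧ mu = 0))
    (ha : C lam * f a 0 + C mu * f a 1 = 0)
    (hb : C lam * f b 0 + C mu * f b 1 = 0) : False := by
  obtain ⟨c, hca, hcb, hcover⟩ := third_index a b hab
  set h : Fin 2 → ℂ := ![lam, mu] with hhdef
  have hh : h ≠ 0 := by
    intro h0
    apply hlm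
    constructor
    · have := congrFun h0 0; simpa [hhdef] using this
    · have := congrFun h0 1; simpa [hhdef] using this
  set H := Submodule.span ℂ {h}
  set K := Submodule.span ℂ {(Pi.single c 1 : Fin 3 → ℂ)}
  set v := f.mulVec (fun j => (C (h j) : Rp)) with hvdef
  have hva : v a = 0 := by
    have : v a = f a 0 * C lam + f a 1 * C mu := by
      simp [hvdef, Matrix.mulVec, dotProduct, Fin.sum_univ_two, hhdef]
    rw [this]; linear_combination ha
  have hvb : v b = 0 := by
    have : v b = f b 0 * C lam + f b 1 * C mu := by
      simp [hvdef, Matrix.mulVec, dotProduct, Fin.sum_univ_two, hhdef]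
    rw [this]; linear_combination hb
  have hmaps : MapsInto f H K := by
    intro h' hh'
    obtain ⟨t, ht⟩ := Submodule.mem_span_singleton.mp hh'
    have hfun : (fun j => (C (h' j) : Rp)) = (C t : Rp) • (fun j => (C (h j) : Rp)) := by
      funext j
      have : h' j = t * h j := by rw [← ht]; simp
      simp [this, C_mul]
    rw [hfun, Matrix.mulVec_smul]
    apply Submodule.smul_mem
    have hv : v = v c • (fun i => (C ((Pi.single c 1 : Fin 3 → ℂ) i) : Rp)) := by
      funext i
      rcases hcover i with rfl | rfl | rfl
      · simp [hva, Pi.single_apply, Ne.symm hca]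
      · simp [hvb, Pi.single_apply, Ne.symm hcb]
      · simp [Pi.single_apply]
    rw [← hvdef, hv]
    exact Submodule.smul_mem _ _ (mem_KtensorR K _ (Submodule.mem_span_singleton_self _))
  have hH1 : Module.finrank ℂ H = 1 := finrank_span_singleton hh
  have hK1 : Module.finrank ℂ K = 1 := by
    apply finrank_span_singleton
    intro h0
    have := congrFun h0 c
    simp [Pi.single_apply] at this
  have hKne : K ≠ ⊤ := by
    intro h0
    have h3 : Module.finrank ℂ K = 3 := by
      rw [h0, finrank_top]; exact Module.finrank_fin_fun ℂ
    rw [hK1] at h3; exact absurd h3 (by norm_num)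
  have hHne : H ≠ ⊥ := by
    rw [Submodule.span_singleton_eq_bot.ne]; exact hh
  have := hstable H K hHne hmaps (fun hcon => hKne hcon.2)
  rw [hH1, hK1] at this
  omega

/-- A row relation contradicts stability. -/
lemma rowRel_contra (f : Matrix (Fin 3) (Fin 2) Rp) (hstable : Stable32 f)
    (a b : Fin 3) (hab : a ≠ b) (lam mu : ℂ) (hmu : mu ≠ 0)
    (hrel : ∀ j : Fin 2, C lam * f a j + C mu * f b j = 0) : False := by
  obtain ⟨c, hca, hcb, hcover⟩ := third_index a b hab
  set ℓ : (Fin 3 → ℂ) →ₗ[ℂ] ℂ := lam • LinearMap.proj a + mu • LinearMap.proj b with hldef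
  have hℓ : ∀ x : Fin 3 → ℂ, ℓ x = lam * x a + mu * x b := by
    intro x; simp [hldef]
  set K := LinearMap.ker ℓ with hKdef
  set w1 : Fin 3 → ℂ := Pi.single c 1 with hw1def
  set w2 : Fin 3 → ℂ := mu • (Pi.single a 1 : Fin 3 → ℂ) - lam • (Pi.single b 1 : Fin 3 → ℂ) with hw2def
  have hw1 : w1 ∈ K := by
    rw [hKdef, LinearMap.mem_ker, hℓ]
    simp [hw1def, Pi.single_apply, Ne.symm hca, Ne.symm hcb]
  have hw2 : w2 ∈ K := by
    rw [hKdef, LinearMap.mem_ker, hℓ]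
    simp [hw2def, Pi.single_apply, hab, Ne.symm hab]
    ring
  have hCmu : (C mu⁻¹ : Rp) * C mu = 1 := by
    rw [← C_mul, inv_mul_cancel₀ hmu, C_1]
  have hmaps : MapsInto f ⊤ K := by
    intro h _
    set v := f.mulVec (fun j => (C (h j) : Rp)) with hvdef
    have hvab : C lam * v a + C mu * v b = 0 := by
      have hva : v a = f a 0 * C (h 0) + f a 1 * C (h 1) := by
        simp [hvdef, Matrix.mulVec, dotProduct, Fin.sum_univ_two]
      have hvb : v b = f b 0 * C (h 0) + f b 1 * C (h 1) := by
        simp [hvdef, Matrix.mulVec, dotProduct, Fin.sum_univ_two]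
      rw [hva, hvb]
      linear_combination (C (h 0) : Rp) * hrel 0 + (C (h 1) : Rp) * hrel 1
    have hvb' : v b = (C mu⁻¹ : Rp) * v a * C (-lam) := by
      have : (C mu : Rp) * v b = C mu * ((C mu⁻¹ : Rp) * v a * C (-lam)) := by
        rw [map_neg]
        linear_combination hvab + (v a * C lam) * hCmu
      exact mul_left_cancel₀ (fun h0 => hmu (by simpa using (C_injective _ _ (h0.trans C_0.symm)))) this
    have hv : v = v c • (fun i => (C (w1 i) : Rp)) + ((C mu⁻¹ : Rp) * v a) • (fun i => (C (w2 i) : Rp)) := by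
      funext i
      rcases hcover i with hi | hi | hi
      all_goals rw [hi]
      · have hw1a : w1 a = 0 := by simp [hw1def, Pi.single_apply, Ne.symm hca]
        have hw2a : w2 a = mu := by simp [hw2def, Pi.single_apply, Ne.symm hab]
        simp only [Pi.add_apply, Pi.smul_apply, smul_eq_mul, hw1a, hw2a, map_zero, mul_zero, zero_add]
        linear_combination (-(v a)) * hCmu
      · have hw1b : w1 b = 0 := by simp [hw1def, Pi.single_apply, Ne.symm hcb]
        have hw2b : w2 b = -lam := by simp [hw2def, Pi.single_apply, hab]
        simp only [Pi.add_apply, Pi.smul_apply, smul_eq_mul, hw1b, hw2b, map_zero, mul_zero, zero_add]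
        rw [hvb']
      · have hw1c : w1 c = 1 := by simp [hw1def, Pi.single_apply]
        have hw2c : w2 c = 0 := by simp [hw2def, Pi.single_apply, hca, hcb]
        simp [hw1c, hw2c]
    rw [hv]
    exact Submodule.add_mem _ (Submodule.smul_mem _ _ (mem_KtensorR K _ hw1))
      (Submodule.smul_mem _ _ (mem_KtensorR K _ hw2))
  have hKne : K ≠ ⊤ := by
    intro h0
    have hmem : (Pi.single b 1 : Fin 3 → ℂ) ∈ K := h0 ▸ Submodule.mem_top
    rw [hKdef, LinearMap.mem_ker, hℓ] at hmem
    simp [Pi.single_apply, hab] at hmem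
    exact hmu hmem
  have hrk : Module.finrank ℂ K ≤ 3 := by
    have := Submodule.finrank_le K
    rwa [Module.finrank_fin_fun] at this
  have hH : Module.finrank ℂ (⊤ : Submodule ℂ (Fin 2 → ℂ)) = 2 := by
    rw [finrank_top]; exact Module.finrank_fin_fun ℂ
  have hHne : (⊤ : Submodule ℂ (Fin 2 → ℂ)) ≠ ⊥ := by
    intro h0
    have : (1 : ℂ) = 0 := by
      have hmem : (fun _ => (1:ℂ) : Fin 2 → ℂ) ∈ (⊥ : Submodule ℂ (Fin 2 → ℂ)) := h0 ▸ Submodule.mem_top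
      have := Submodule.mem_bot ℂ |>.mp hmem
      exact congrFun this 0
    norm_num at this
  have := hstable ⊤ K hHne hmaps (fun hcon => hKne hcon.2)
  rw [hH] at this
  omega

end Stmt5Aux

open Stmt5Aux in
/-- if a 3×2 matrix of linear forms is stable, then all its 2×2 minors
are nonzero polynomials. -/
theorem stmt5 (f : Matrix (Fin 3) (Fin 2) Rp) (hf : ∀ i j, IsLin (f i j))
    (hstable : Stable32 f) :
    ∀ a b : Fin 3, a ≠ b → f a 0 * f b 1 - f a 1 * f b 0 ≠ 0 := by
  intro a b hab hdet
  have hrel : ∀ x : Fin 3 → ℂ,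
      dot (cv (f a 0)) x * dot (cv (f b 1)) x = dot (cv (f a 1)) x * dot (cv (f b 0)) x := by
    intro x
    have := congrArg (eval x) hdet
    simp only [map_sub, _root_.map_mul, map_zero] at this
    rw [eval_lin _ (hf a 0), eval_lin _ (hf b 1), eval_lin _ (hf a 1), eval_lin _ (hf b 0)] at this
    linear_combination this
  rcases core _ _ _ _ hrel with ⟨lam, mu, hlm, h1, h2⟩ | ⟨lam, mu, hlm, h1, h2⟩
  · -- column relation: lam • cv(f a 0) + mu • cv(f a 1) = 0 and same for row b
    exact colRel_contra f hstable a b hab lam mu hlm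
      (comb_eq_zero _ _ (hf a 0) (hf a 1) lam mu h1)
      (comb_eq_zero _ _ (hf b 0) (hf b 1) lam mu h2)
  · -- row relation: lam • cv(f a 0) + mu • cv(f b 0) = 0 and lam • cv(f a 1) + mu • cv(f b 1) = 0
    have hrelj : ∀ j : Fin 2, C lam * f a j + C mu * f b j = 0 := by
      intro j
      fin_cases j
      · exact comb_eq_zero _ _ (hf a 0) (hf b 0) lam mu h1
      · exact comb_eq_zero _ _ (hf a 1) (hf b 1) lam mu h2
    by_cases hmu : mu = 0
    · have hlam : lam ≠ 0 := fun h0 => hlm ⟨h0, hmu⟩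
      apply rowRel_contra f hstable b a (Ne.symm hab) 0 lam hlam
      intro j
      have := hrelj j
      rw [hmu] at this
      simp only [map_zero, zero_mul, add_zero] at this ⊢
      rw [zero_add]
      exact this
    · exact rowRel_contra f hstable a b hab lam mu hmu hrelj
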